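/- arXiv:2102.05836 — 4 statements merged into one kernel-verified Lean document; each statement's English description precedes it below -/
import Mathlib

section
/- If d_φ is a Bregman divergence and X is an integrable random variable with values in a convex set S with E[X] in the relative interior of S, then E[d_φ(X, s)] - E[d_φ(X, E[X])] = d_φ(E[X], s) for all s, and hence μ = E[X] is the unique minimizer of s ↦ E[d_φ(X, s)]. -/
open scoped InnerProductSpace
open MeasureTheory

/-- Strict gradient inequality for strictly convex functions on a convex set. -/
lemma strict_gradient_ineq {d : ℕ} {S : Set (EuclideanSpace ℝ (Fin d))} (hS : Convex ℝ S)
    {φ : EuclideanSpace ℝ (Fin d) → ℝ}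
    (hconv : StrictConvexOn ℝ S φ) (hdiff : Differentiable ℝ φ)
    {s μ : EuclideanSpace ℝ (Fin d)} (hs : s ∈ S) (hμ : μ ∈ S) (hne : s ≠ μ) :
    φ s + ⟪gradient φ s, μ - s⟫_ℝ < φ μ := by
  set v : EuclideanSpace ℝ (Fin d) := μ - s with hv
  have hv0 : v ≠ 0 := sub_ne_zero.mpr (Ne.symm hne)
  set g : ℝ → ℝ := fun t => φ (s + t • v) with hg
  have hmem : ∀ t ∈ Set.Icc (0:ℝ) 1, s + t • v ∈ S := by
    intro t ht
    have : s + t • v = (1 - t) • s + t • μ := by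
      rw [hv]; module
    rw [this]
    exact hS hs hμ (by linarith [ht.2]) ht.1 (by ring)
  have hinj : ∀ t₁ t₂ : ℝ, t₁ ≠ t₂ → s + t₁ • v ≠ s + t₂ • v := by
    intro t₁ t₂ h12 hEq
    apply h12
    have := add_left_cancel hEq
    exact smul_left_injective ℝ hv0 this
  have hgconv : StrictConvexOn ℝ (Set.Icc (0:ℝ) 1) g := by
    refine ⟨convex_Icc 0 1, ?_⟩
    intro t₁ ht₁ t₂ ht₂ h12 a b ha hb hab
    have key : s + (a * t₁ + b * t₂) • v = a • (s + t₁ • v) + b • (s + t₂ • v) := by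
      have h2 : a • (s + t₁ • v) + b • (s + t₂ • v) = (a + b) • s + (a * t₁ + b * t₂) • v := by
        module
      rw [h2, hab, one_smul]
    simp only [hg, smul_eq_mul, key]
    exact hconv.2 (hmem t₁ ht₁) (hmem t₂ ht₂) (hinj t₁ t₂ h12) ha hb hab
  have hderiv : ∀ t : ℝ, HasDerivAt g (⟪gradient φ (s + t • v), v⟫_ℝ) t := by
    intro t
    have hline : HasDerivAt (fun t : ℝ => s + t • v) v t := by
      simpa using ((hasDerivAt_id t).smul_const v).const_add s
    have hφ : HasFDerivAt φ ((InnerProductSpace.toDual ℝ _) (gradient φ (s + t • v)))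
        (s + t • v) := (hdiff _).hasGradientAt
    have := hφ.comp_hasDerivAt t hline
    simp only [InnerProductSpace.toDual_apply_apply] at this; exact this
  have h01 : (0:ℝ) < 1 := one_pos
  have := hgconv.lt_slope_of_hasDerivAt (x := 0) (y := 1)
    (Set.left_mem_Icc.mpr zero_le_one) (Set.right_mem_Icc.mpr zero_le_one) h01 (hderiv 0)
  have hg0 : g 0 = φ s := by simp [hg]
  have hg1 : g 1 = φ μ := by simp [hg, hv]
  rw [slope_def_field, hg0, hg1] at this
  simp only [zero_smul, add_zero] at this
  have : ⟪gradient φ s, v⟫_ℝ < (φ μ - φ s) / (1 - 0) := this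
  rw [hv] at this ⊢
  linarith [this]

/-- For a Bregman divergence `d_φ` and an integrable `S`-valued random variable `X` with
`E[X]` in the relative (intrinsic) interior of `S`,
`E[d_φ(X,s)] - E[d_φ(X,E[X])] = d_φ(E[X],s)`, and hence `E[X]` is the unique minimizer
of `s ↦ E[d_φ(X,s)]` over the relative interior of `S`. -/
theorem bregman_centroid {d : ℕ} {Ω : Type*} [MeasureSpace Ω]
    [IsProbabilityMeasure (volume : Measure Ω)]
    (S : Set (EuclideanSpace ℝ (Fin d))) (hS : Convex ℝ S)
    (φ : EuclideanSpace ℝ (Fin d) → ℝ)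
    (hconv : StrictConvexOn ℝ S φ) (hdiff : Differentiable ℝ φ)
    (dφ : EuclideanSpace ℝ (Fin d) → EuclideanSpace ℝ (Fin d) → ℝ)
    (hdφ : ∀ x s, dφ x s = φ x - φ s - ⟪gradient φ s, x - s⟫_ℝ)
    (X : Ω → EuclideanSpace ℝ (Fin d)) (hXS : ∀ ω, X ω ∈ S)
    (hXint : Integrable X) (hφXint : Integrable (fun ω => φ (X ω)))
    (hdint : ∀ s ∈ intrinsicInterior ℝ S, Integrable (fun ω => dφ (X ω) s))
    (hmean : (∫ ω, X ω) ∈ intrinsicInterior ℝ S) :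
    (∀ s ∈ intrinsicInterior ℝ S,
        (∫ ω, dφ (X ω) s) - (∫ ω, dφ (X ω) (∫ ω, X ω)) = dφ (∫ ω, X ω) s)
    ∧ (∀ s ∈ intrinsicInterior ℝ S, s ≠ (∫ ω, X ω) →
        (∫ ω, dφ (X ω) (∫ ω, X ω)) < ∫ ω, dφ (X ω) s) := by
  set μ : EuclideanSpace ℝ (Fin d) := ∫ ω, X ω with hμ
  have hXsub : ∀ s : EuclideanSpace ℝ (Fin d), Integrable (fun ω => X ω - s) :=
    fun s => hXint.sub (integrable_const s)
  have hXmean : ∀ s : EuclideanSpace ℝ (Fin d), (∫ ω, (X ω - s)) = μ - s := by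
    intro s
    rw [integral_sub hXint (integrable_const s), integral_const]
    simp [hμ]
  have hval : ∀ s : EuclideanSpace ℝ (Fin d),
      (∫ ω, dφ (X ω) s) = (∫ ω, φ (X ω)) - φ s - ⟪gradient φ s, μ - s⟫_ℝ := by
    intro s
    have h1 : Integrable (fun ω => ⟪gradient φ s, X ω - s⟫_ℝ) :=
      (hXsub s).const_inner _
    calc (∫ ω, dφ (X ω) s)
        = ∫ ω, (φ (X ω) - φ s - ⟪gradient φ s, X ω - s⟫_ℝ) := by
          simp_rw [hdφ]
      _ = (∫ ω, (φ (X ω) - φ s)) - ∫ ω, ⟪gradient φ s, X ω - s⟫_ℝ :=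
          integral_sub (hφXint.sub (integrable_const _)) h1
      _ = (∫ ω, φ (X ω)) - φ s - ⟪gradient φ s, μ - s⟫_ℝ := by
          rw [integral_sub hφXint (integrable_const _), integral_const,
            integral_inner (hXsub s), hXmean s]
          simp
  have hpart1 : ∀ s ∈ intrinsicInterior ℝ S,
      (∫ ω, dφ (X ω) s) - (∫ ω, dφ (X ω) μ) = dφ μ s := by
    intro s _
    rw [hval s, hval μ, hdφ μ s, sub_self, inner_zero_right]
    ring
  refine ⟨hpart1, ?_⟩
  intro s hsmem hne
  have h := hpart1 s hsmem
  have hpos : 0 < dφ μ s := by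
    rw [hdφ μ s]
    have := strict_gradient_ineq hS hconv hdiff
      (intrinsicInterior_subset hsmem) (intrinsicInterior_subset hmean) hne
    linarith
  linarith
end

section
/- If d_φ is a Bregman divergence and the association probabilities p(μ|x) are fixed, then the codevector location minimizing the weighted expected distortion ∫ p(x) p(μ|x) d_φ(x,μ) dx is μ* = E[X | μ] = (∫ x p(x) p(μ|x) dx) / p(μ), where p(μ) = ∫ p(x) p(μ|x) dx > 0. -/
open scoped InnerProductSpace
open MeasureTheory

/-- Strict Bregman positivity: for a strictly convex differentiable function,
the graph lies strictly above its tangent plane. -/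
lemma bregman_pos {d : ℕ} {S : Set (EuclideanSpace ℝ (Fin d))} (hS : Convex ℝ S)
    {φ : EuclideanSpace ℝ (Fin d) → ℝ}
    (hconv : StrictConvexOn ℝ S φ) (hdiff : Differentiable ℝ φ)
    {x y : EuclideanSpace ℝ (Fin d)} (hx : x ∈ S) (hy : y ∈ S) (hxy : x ≠ y) :
    ⟪gradient φ x, y - x⟫_ℝ < φ y - φ x := by
  set v := y - x with hv
  have hv0 : v ≠ 0 := sub_ne_zero.mpr hxy.symm
  set L : ℝ → EuclideanSpace ℝ (Fin d) := fun t => x + t • v with hL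
  -- g = φ ∘ L is strictly convex on [0,1]
  have hmem : ∀ t ∈ Set.Icc (0 : ℝ) 1, L t ∈ S := by
    intro t ht
    have hmem' := hS hx hy (by linarith [ht.2] : (0:ℝ) ≤ 1 - t) ht.1 (by ring)
    have heq : (1 - t) • x + t • y = x + t • v := by
      simp only [hv]; module
    rw [heq] at hmem'
    exact hmem'
  have hg : StrictConvexOn ℝ (Set.Icc (0 : ℝ) 1) (φ ∘ L) := by
    refine ⟨convex_Icc 0 1, ?_⟩
    intro a ha b hb hab p q hp hq hpq
    have hLab : L a ≠ L b := by
      intro h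
      apply hab
      have : (a - b) • v = 0 := by
        have := congrArg (fun z => z - (x + b • v)) h
        simpa [hL, sub_smul, add_sub_add_left_eq_sub] using this
      have := (smul_eq_zero.mp this).resolve_right hv0
      linarith [sub_eq_zero.mp this]
    have key := hconv.2 (hmem a ha) (hmem b hb) hLab hp hq hpq
    have hLcomb : L (p * a + q * b) = p • L a + q • L b := by
      have hrhs : p • L a + q • L b = (p + q) • x + (p * a + q * b) • v := by
        simp only [hL]; module
      rw [hrhs, hpq, one_smul, hL]
    simpa [Function.comp, hLcomb] using key
  -- derivative of g at 0
  have hLder : HasDerivAt L v 0 := by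
    have h1 : HasDerivAt (fun t : ℝ => t • v) ((1 : ℝ) • v) 0 :=
      (hasDerivAt_id (0:ℝ)).smul_const v
    simpa [hL] using h1.const_add x
  have hgder : HasDerivAt (φ ∘ L) (fderiv ℝ φ (L 0) v) 0 :=
    (hdiff (L 0)).hasFDerivAt.comp_hasDerivAt 0 hLder
  have hL0 : L 0 = x := by simp [hL]
  rw [hL0] at hgder
  have hslope := hg.lt_slope_of_hasDerivAt (by simp : (0:ℝ) ∈ Set.Icc (0:ℝ) 1)
    (by simp : (1:ℝ) ∈ Set.Icc (0:ℝ) 1) one_pos hgder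
  have hgrad : ⟪gradient φ x, v⟫_ℝ = fderiv ℝ φ x v := by
    rw [gradient]
    exact InnerProductSpace.toDual_symm_apply
  have hL1 : L 1 = y := by simp [hL, hv]
  rw [slope_def_field] at hslope
  simp only [Function.comp, hL0, hL1] at hslope
  rw [hgrad]
  calc fderiv ℝ φ x v < (φ y - φ x) / (1 - 0) := hslope
    _ = φ y - φ x := by norm_num

/-- With fixed association probabilities `w ω = p(μ | X ω)`, the codevector minimizing the
weighted expected Bregman distortion `E[w · d_φ(X, s)]` is
`μ* = E[X | μ] = E[w • X] / E[w]`. -/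
theorem bregman_weighted_centroid {d : ℕ} {Ω : Type*} [MeasureSpace Ω]
    [IsProbabilityMeasure (volume : Measure Ω)]
    (S : Set (EuclideanSpace ℝ (Fin d))) (hS : Convex ℝ S)
    (φ : EuclideanSpace ℝ (Fin d) → ℝ)
    (hconv : StrictConvexOn ℝ S φ) (hdiff : Differentiable ℝ φ)
    (dφ : EuclideanSpace ℝ (Fin d) → EuclideanSpace ℝ (Fin d) → ℝ)
    (hdφ : ∀ x s, dφ x s = φ x - φ s - ⟪gradient φ s, x - s⟫_ℝ)
    (X : Ω → EuclideanSpace ℝ (Fin d)) (hXS : ∀ ω, X ω ∈ S)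
    (w : Ω → ℝ) (hw : ∀ ω, w ω ∈ Set.Icc (0 : ℝ) 1)
    (hwint : Integrable w)
    (hwX : Integrable (fun ω => w ω • X ω))
    (hwφ : Integrable (fun ω => w ω * φ (X ω)))
    (hdint : ∀ s ∈ intrinsicInterior ℝ S, Integrable (fun ω => w ω * dφ (X ω) s))
    (hpμ : 0 < ∫ ω, w ω)
    (μstar : EuclideanSpace ℝ (Fin d))
    (hμstar : μstar = (∫ ω, w ω)⁻¹ • ∫ ω, w ω • X ω)
    (hμstarS : μstar ∈ intrinsicInterior ℝ S) :
    ∀ s ∈ intrinsicInterior ℝ S, s ≠ μstar →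
      (∫ ω, w ω * dφ (X ω) μstar) < ∫ ω, w ω * dφ (X ω) s := by
  intro s hs hsne
  set A : ℝ := ∫ ω, w ω with hA
  set B : EuclideanSpace ℝ (Fin d) := ∫ ω, w ω • X ω with hB
  have hAB : B = A • μstar := by
    rw [hμstar, smul_smul, mul_inv_cancel₀ (ne_of_gt hpμ), one_smul]
  -- expansion of the weighted distortion integral
  have expand : ∀ t : EuclideanSpace ℝ (Fin d),
      (∫ ω, w ω * dφ (X ω) t) =
        (∫ ω, w ω * φ (X ω)) - A * φ t - ⟪gradient φ t, B - A • t⟫_ℝ := by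
    intro t
    have hptw : ∀ ω, w ω * dφ (X ω) t =
        w ω * φ (X ω) - w ω * φ t - ⟪gradient φ t, w ω • X ω - w ω • t⟫_ℝ := by
      intro ω
      rw [hdφ, ← smul_sub, real_inner_smul_right]
      ring
    have hint3 : Integrable (fun ω => ⟪gradient φ t, w ω • X ω - w ω • t⟫_ℝ) := by
      have : Integrable (fun ω => w ω • X ω - w ω • t) :=
        hwX.sub (hwint.smul_const t)
      exact (innerSL ℝ (gradient φ t)).integrable_comp this
    have hint2 : Integrable (fun ω => w ω * φ t) := hwint.mul_const _
    calc (∫ ω, w ω * dφ (X ω) t)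
        = ∫ ω, (w ω * φ (X ω) - w ω * φ t - ⟪gradient φ t, w ω • X ω - w ω • t⟫_ℝ) := by
          exact integral_congr_ae (Filter.Eventually.of_forall hptw)
      _ = (∫ ω, w ω * φ (X ω)) - (∫ ω, w ω * φ t)
            - ∫ ω, ⟪gradient φ t, w ω • X ω - w ω • t⟫_ℝ := by
          have hws : Integrable (fun ω => w ω * φ (X ω) - w ω * φ t) := hwφ.sub hint2
          rw [integral_sub hws hint3, integral_sub hwφ hint2]
      _ = (∫ ω, w ω * φ (X ω)) - A * φ t - ⟪gradient φ t, B - A • t⟫_ℝ := by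
          congr 1
          · congr 1
            rw [integral_mul_const]
          · have hsubint : Integrable (fun ω => w ω • X ω - w ω • t) :=
              hwX.sub (hwint.smul_const t)
            have hcomm := (innerSL ℝ (gradient φ t)).integral_comp_comm hsubint
            simp only [innerSL_apply_apply] at hcomm
            rw [hcomm, integral_sub hwX (hwint.smul_const t), integral_smul_const]
    -- end calc
  have hmS : μstar ∈ S := intrinsicInterior_subset hμstarS
  have hsS : s ∈ S := intrinsicInterior_subset hs
  have hpos : ⟪gradient φ s, μstar - s⟫_ℝ < φ μstar - φ s :=
    bregman_pos hS hconv hdiff hsS hmS hsne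
  have e1 := expand μstar
  have e2 := expand s
  rw [hAB] at e1 e2
  rw [e1, e2]
  have h1 : A • μstar - A • μstar = (0 : EuclideanSpace ℝ (Fin d)) := sub_self _
  rw [h1, inner_zero_right]
  have h2 : A • μstar - A • s = A • (μstar - s) := (smul_sub A μstar s).symm
  rw [h2, real_inner_smul_right]
  have := mul_lt_mul_of_pos_left hpos hpμ
  nlinarith
end

section
/- Let ρₙ₊₁ = ρₙ + αₙ(aₙ - ρₙ) where aₙ are i.i.d. bounded random variables with mean a, and the stepsizes satisfy αₙ > 0, Σₙ αₙ = ∞, Σₙ αₙ² < ∞. Then ρₙ converges to a almost surely. -/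
open MeasureTheory ProbabilityTheory Filter

private lemma sa_prod_tendsto_zero (β : ℕ → ℝ) (h0 : ∀ n, 0 ≤ β n) (h1 : ∀ n, β n ≤ 1)
    (hdiv : ¬ Summable β) :
    Tendsto (fun m => ∏ k ∈ Finset.range m, (1 - β k)) atTop (nhds 0) := by
  have hsum : Tendsto (fun m => ∑ k ∈ Finset.range m, β k) atTop atTop :=
    (not_summable_iff_tendsto_nat_atTop_of_nonneg h0).1 hdiv
  have hexp : Tendsto (fun m => Real.exp (-∑ k ∈ Finset.range m, β k)) atTop (nhds 0) :=
    Real.tendsto_exp_atBot.comp (tendsto_neg_atTop_atBot.comp hsum)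
  refine squeeze_zero (fun m => Finset.prod_nonneg fun k _ => by linarith [h1 k])
    (fun m => ?_) hexp
  rw [← Finset.sum_neg_distrib, Real.exp_sum]
  exact Finset.prod_le_prod (fun k _ => by linarith [h1 k])
    (fun k _ => by linarith [Real.add_one_le_exp (-β k)])

private lemma sa_det_rec_tendsto_zero (α c v : ℕ → ℝ)
    (hαpos : ∀ n, 0 < α n) (hα0 : Tendsto α atTop (nhds 0)) (hαdiv : ¬ Summable α)
    (hc : Tendsto c atTop (nhds 0))
    (hv : ∀ n, v (n + 1) = (1 - α n) * v n + α n * c n) :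
    Tendsto v atTop (nhds 0) := by
  rw [Metric.tendsto_atTop]
  intro ε hε
  obtain ⟨N₁, hN₁⟩ := (Metric.tendsto_atTop.1 hα0) 1 one_pos
  obtain ⟨N₂, hN₂⟩ := (Metric.tendsto_atTop.1 hc) (ε / 3) (by linarith)
  set N := max N₁ N₂ with hN
  have hα1 : ∀ n, N ≤ n → α n ≤ 1 := by
    intro n hn
    have := hN₁ n (le_trans (le_max_left _ _) hn)
    rw [Real.dist_eq, sub_zero] at this
    exact (abs_lt.1 this).2.le
  have hcb : ∀ n, N ≤ n → |c n| ≤ ε / 3 := by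
    intro n hn
    have := hN₂ n (le_trans (le_max_right _ _) hn)
    rw [Real.dist_eq, sub_zero] at this
    exact this.le
  set P : ℕ → ℝ := fun m => ∏ k ∈ Finset.range m, (1 - α (N + k)) with hPdef
  have hβ : ¬ Summable (fun k => α (N + k)) := by
    intro h
    exact hαdiv ((summable_nat_add_iff N).1 (h.congr fun k => by rw [Nat.add_comm]))
  have hP0 : Tendsto P atTop (nhds 0) :=
    sa_prod_tendsto_zero _ (fun k => (hαpos _).le)
      (fun k => hα1 (N + k) (Nat.le_add_right _ _)) hβ
  have key : ∀ m, |v (N + m)| ≤ ε / 3 + P m * |v N| := by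
    intro m
    induction m with
    | zero =>
      simp only [hPdef, Finset.range_zero, Finset.prod_empty, Nat.add_zero, one_mul]
      linarith [abs_nonneg (v N)]
    | succ m ih =>
      have hα1' : α (N + m) ≤ 1 := hα1 _ (Nat.le_add_right _ _)
      have hαp' : 0 < α (N + m) := hαpos _
      have hcb' : |c (N + m)| ≤ ε / 3 := hcb _ (Nat.le_add_right _ _)
      have hPm : 0 ≤ P m := Finset.prod_nonneg fun k _ => by linarith [hα1 (N + k) (Nat.le_add_right _ _)]
      have h1 : |v (N + (m + 1))| ≤ (1 - α (N + m)) * |v (N + m)| + α (N + m) * (ε / 3) := by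
        have : N + (m + 1) = (N + m) + 1 := by omega
        rw [this, hv]
        calc |(1 - α (N + m)) * v (N + m) + α (N + m) * c (N + m)|
            ≤ |(1 - α (N + m)) * v (N + m)| + |α (N + m) * c (N + m)| := abs_add_le _ _
          _ = (1 - α (N + m)) * |v (N + m)| + α (N + m) * |c (N + m)| := by
              rw [abs_mul, abs_mul, abs_of_nonneg (by linarith : (0:ℝ) ≤ 1 - α (N + m)),
                abs_of_pos hαp']
          _ ≤ (1 - α (N + m)) * |v (N + m)| + α (N + m) * (ε / 3) := by
              have := mul_le_mul_of_nonneg_left hcb' hαp'.le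
              linarith
      have h2 : (1 - α (N + m)) * |v (N + m)| ≤ (1 - α (N + m)) * (ε / 3 + P m * |v N|) :=
        mul_le_mul_of_nonneg_left ih (by linarith)
      have hPs : P (m + 1) = P m * (1 - α (N + m)) := Finset.prod_range_succ _ _
      rw [hPs]
      nlinarith
  have hPv : Tendsto (fun m => P m * |v N|) atTop (nhds 0) := by
    simpa using hP0.mul_const |v N|
  obtain ⟨M, hM⟩ := (Metric.tendsto_atTop.1 hPv) (ε / 3) (by linarith)
  refine ⟨N + M, fun n hn => ?_⟩
  obtain ⟨m, rfl, hMm⟩ : ∃ m, n = N + m ∧ M ≤ m := ⟨n - N, by omega, by omega⟩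
  have hM' := hM m hMm
  rw [Real.dist_eq, sub_zero] at hM' ⊢
  have habs' := le_abs_self (P m * |v N|)
  calc |v (N + m)| ≤ ε / 3 + P m * |v N| := key m
    _ < ε / 3 + ε / 3 := by linarith [hM', habs']
    _ < ε := by linarith

/-- Stochastic approximation of the mean: under the Robbins–Monro stepsize conditions,
the recursion `ρ_{n+1} = ρ_n + α_n (a_n - ρ_n)` driven by i.i.d. bounded random variables
with mean `a` converges to `a` almost surely. -/
theorem stochastic_approximation_mean {Ω : Type*} [MeasureSpace Ω]
    [IsProbabilityMeasure (volume : Measure Ω)]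
    (a : ℕ → Ω → ℝ) (hmeas : ∀ n, Measurable (a n))
    (hindep : iIndepFun a)
    (hident : ∀ n, IdentDistrib (a n) (a 0))
    (C : ℝ) (hbdd : ∀ n, ∀ᵐ ω, |a n ω| ≤ C)
    (abar : ℝ) (hmean : ∀ n, (∫ ω, a n ω) = abar)
    (α : ℕ → ℝ) (hαpos : ∀ n, 0 < α n)
    (hαdiv : ¬ Summable α) (hαsq : Summable (fun n => (α n) ^ 2))
    (ρ₀ : ℝ) (ρ : ℕ → Ω → ℝ)
    (hρ0 : ∀ ω, ρ 0 ω = ρ₀)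
    (hρ : ∀ n ω, ρ (n + 1) ω = ρ n ω + α n * (a n ω - ρ n ω)) :
    ∀ᵐ ω, Tendsto (fun n => ρ n ω) atTop (nhds abar) := by
  classical
  have hsm : ∀ i, StronglyMeasurable (a i) := fun i => (hmeas i).stronglyMeasurable
  set ℱ := Filtration.natural a hsm with hℱ
  set ε : ℕ → Ω → ℝ := fun k ω => α k * (a k ω - abar) with hεdef
  set f : ℕ → Ω → ℝ := fun n ω => ∑ k ∈ Finset.range n, ε k ω with hfdef
  -- step sizes tend to zero
  have hα0 : Tendsto α atTop (nhds 0) := by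
    have h2 : Tendsto (fun n => Real.sqrt ((α n) ^ 2)) atTop (nhds (Real.sqrt 0)) :=
      (Real.continuous_sqrt.continuousAt).tendsto.comp hαsq.tendsto_atTop_zero
    simpa [Real.sqrt_eq_zero', Real.sqrt_sq (hαpos _).le] using h2
  -- integrability facts
  have ha2 : ∀ k, MemLp (a k) 2 (volume : Measure Ω) := fun k =>
    MemLp.of_bound (hsm k).aestronglyMeasurable C
      (by filter_upwards [hbdd k] with ω h using by rwa [Real.norm_eq_abs])
  have hε2 : ∀ k, MemLp (ε k) 2 (volume : Measure Ω) := fun k =>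
    ((ha2 k).sub (memLp_const abar)).const_mul (α k)
  have hεint : ∀ k, Integrable (ε k) := fun k => (hε2 k).integrable one_le_two
  have hf2 : ∀ n, MemLp (f n) 2 (volume : Measure Ω) := by
    intro n
    have : f n = ∑ k ∈ Finset.range n, ε k := by
      funext ω; simp [hfdef, Finset.sum_apply]
    rw [this]
    exact memLp_finsetSum' _ fun k _ => hε2 k
  have hfint : ∀ n, Integrable (f n) := fun n => (hf2 n).integrable one_le_two
  have hεmean : ∀ k, ∫ ω, ε k ω = 0 := by
    intro k
    simp only [hεdef]
    rw [integral_const_mul, integral_sub ((ha2 k).integrable one_le_two) (integrable_const abar),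
      integral_const, hmean k]
    simp
  -- the martingale (shifted by one so that increments are independent of the past)
  set g : ℕ → Ω → ℝ := fun n => f (n + 1) with hgdef
  have hadp : StronglyAdapted ℱ g := by
    intro n
    apply Finset.stronglyMeasurable_fun_sum
    intro k hk
    have hk' : k ≤ n := by
      have := Finset.mem_range.1 hk; omega
    exact (((Filtration.stronglyAdapted_natural hsm k).mono (ℱ.mono hk')).sub
      stronglyMeasurable_const).const_mul (α k)
  have hcond : ∀ n, g n =ᵐ[volume] (volume : Measure Ω)[g (n + 1)|ℱ n] := by
    intro n
    have hsplit : g (n + 1) = g n + ε (n + 1) := by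
      funext ω
      show f (n + 2) ω = f (n + 1) ω + ε (n + 1) ω
      simp [hfdef, Finset.sum_range_succ]
    have h1 : (volume : Measure Ω)[g (n + 1)|ℱ n]
        =ᵐ[volume] (volume : Measure Ω)[g n|ℱ n] + (volume : Measure Ω)[ε (n + 1)|ℱ n] := by
      rw [hsplit]; exact condExp_add (hfint (n + 1)) (hεint (n + 1)) _
    have h2 : (volume : Measure Ω)[g n|ℱ n] = g n :=
      condExp_of_stronglyMeasurable (ℱ.le n) (hadp n) (hfint (n + 1))
    have h3 : (volume : Measure Ω)[ε (n + 1)|ℱ n] =ᵐ[volume] 0 := by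
      have hsmul : ε (n + 1) = α (n + 1) • (a (n + 1) - fun _ => abar) := by
        funext ω; simp [hεdef, smul_eq_mul]
      have hc1 : (volume : Measure Ω)[a (n + 1) - fun _ => abar|ℱ n]
          =ᵐ[volume] (volume : Measure Ω)[a (n + 1)|ℱ n]
            - (volume : Measure Ω)[(fun _ => abar)|ℱ n] :=
        condExp_sub ((ha2 (n + 1)).integrable one_le_two) (integrable_const abar) _
      have hc2 : (volume : Measure Ω)[a (n + 1)|ℱ n] =ᵐ[volume] fun _ => ∫ ω, a (n + 1) ω :=
        hindep.condExp_natural_ae_eq_of_lt hsm (Nat.lt_succ_self n)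
      have hc3 : (volume : Measure Ω)[(fun _ => abar : Ω → ℝ)|ℱ n] = fun _ => abar :=
        condExp_const (ℱ.le n) abar
      have hsm' : (volume : Measure Ω)[ε (n + 1)|ℱ n]
          =ᵐ[volume] α (n + 1) • (volume : Measure Ω)[a (n + 1) - fun _ => abar|ℱ n] := by
        rw [hsmul]; exact condExp_smul (α (n + 1)) _ _
      refine hsm'.trans ?_
      filter_upwards [hc1, hc2] with ω h1' h2'
      simp only [Pi.smul_apply, h1', Pi.sub_apply, h2', hc3, hmean (n + 1), smul_eq_mul,
        Pi.zero_apply]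
      ring
    filter_upwards [h1, h3] with ω h1' h3'
    rw [h1', h2]
    simp [h3']
  have hmart : Martingale g ℱ volume := martingale_nat hadp (fun n => hfint (n + 1)) hcond
  -- L¹ bound
  set V : ℝ := variance (fun ω => a 0 ω - abar) volume with hVdef
  set S : ℝ := ∑' n, (α n) ^ 2 with hSdef
  have hV0 : 0 ≤ V := variance_nonneg _ _
  set B : ℝ := (1 + S * V) / 2 with hBdef
  have hvar : ∀ n, variance (f n) volume = ∑ k ∈ Finset.range n, (α k) ^ 2 * V := by
    intro n
    have hfs : f n = ∑ k ∈ Finset.range n, ε k := by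
      funext ω; simp [hfdef, Finset.sum_apply]
    rw [hfs, IndepFun.variance_sum (fun k _ => hε2 k) ?_]
    · refine Finset.sum_congr rfl fun k _ => ?_
      have h1 : variance (ε k) volume = (α k) ^ 2 * variance (fun ω => a k ω - abar) volume :=
        variance_const_mul (α k) (fun ω => a k ω - abar) volume
      rw [h1]
      congr 1
      exact ((hident k).comp (measurable_id.sub_const abar)).variance_eq
    · intro i _ j _ hij
      exact (hindep.indepFun hij).comp
        ((measurable_id.sub_const abar).const_mul (α i))
        ((measurable_id.sub_const abar).const_mul (α j))
  have hEf : ∀ n, ∫ ω, f n ω = 0 := by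
    intro n
    simp only [hfdef]
    rw [integral_finset_sum _ fun k _ => hεint k]
    simp [hεmean]
  have hsq : ∀ n, ∫ ω, (f n ω) ^ 2 ≤ S * V := by
    intro n
    have h1 : variance (f n) volume = (∫ ω, (f n ω) ^ 2) - (∫ ω, f n ω) ^ 2 := by
      simpa [Pi.pow_apply] using variance_eq_sub (hf2 n)
    have h2 : ∑ k ∈ Finset.range n, (α k) ^ 2 * V ≤ S * V := by
      rw [← Finset.sum_mul]
      exact mul_le_mul_of_nonneg_right
        (Summable.sum_le_tsum _ (fun i _ => sq_nonneg _) hαsq) hV0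
    have := hvar n
    rw [hEf n] at h1
    nlinarith
  have habs : ∀ n, ∫ ω, |f n ω| ≤ B := by
    intro n
    have hmono : ∫ ω, |f n ω| ≤ ∫ ω, (1 + (f n ω) ^ 2) / 2 := by
      refine integral_mono (hfint n).abs ?_ fun ω => ?_
      · exact ((integrable_const (1:ℝ)).add (hf2 n).integrable_sq).div_const 2
      · nlinarith [sq_nonneg (|f n ω| - 1), sq_abs (f n ω)]
    have heq : ∫ ω, (1 + (f n ω) ^ 2) / 2 = (1 + ∫ ω, (f n ω) ^ 2) / 2 := by
      rw [integral_div, integral_add (integrable_const 1) (hf2 n).integrable_sq, integral_const]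
      simp
    rw [heq] at hmono
    have := hsq n
    rw [hBdef]
    linarith
  have hbound : ∀ n, eLpNorm (f n) 1 volume ≤ ENNReal.ofReal B := by
    intro n
    rw [eLpNorm_one_eq_lintegral_enorm,
      ← ofReal_integral_norm_eq_lintegral_enorm (hfint n)]
    exact ENNReal.ofReal_le_ofReal (by simpa [Real.norm_eq_abs] using habs n)
  have hconv := hmart.submartingale.ae_tendsto_limitProcess (R := B.toNNReal)
    (fun n => hbound (n + 1))
  -- conclusion
  filter_upwards [hconv] with ω hω'
  have hω : Tendsto (fun n => f n ω) atTop (nhds (ℱ.limitProcess g volume ω)) := by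
    rw [← tendsto_add_atTop_iff_nat 1]
    exact hω'
  set L : ℝ := ℱ.limitProcess g volume ω with hLdef
  set T : ℕ → ℝ := fun n => L - f n ω with hTdef
  have hT0 : Tendsto T atTop (nhds 0) := by
    have := tendsto_const_nhds (x := L) (f := atTop (α := ℕ)) |>.sub hω
    simpa using this
  set u : ℕ → ℝ := fun n => (ρ n ω - abar) + T n with hudef
  have hu : ∀ n, u (n + 1) = (1 - α n) * u n + α n * T n := by
    intro n
    simp only [hudef, hTdef, hρ n ω, hfdef, Finset.sum_range_succ, hεdef]
    ring
  have hu0 : Tendsto u atTop (nhds 0) :=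
    sa_det_rec_tendsto_zero α T u hαpos hα0 hαdiv hT0 hu
  have : Tendsto (fun n => u n - T n + abar) atTop (nhds abar) := by
    have := (hu0.sub hT0).add_const abar
    simpa using this
  refine this.congr fun n => ?_
  simp only [hudef]
  ring
end

section
/- For a random variable X with E[X] ∈ ri(S) and a Bregman divergence d_φ, the minimum over s of E[d_φ(X,s)] equals E[φ(X)] - φ(E[X]). -/
open scoped InnerProductSpace
open MeasureTheory

/-- Gradient inequality for a convex differentiable function. -/
lemma bregman_grad_ineq {d : ℕ} {S : Set (EuclideanSpace ℝ (Fin d))}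
    {φ : EuclideanSpace ℝ (Fin d) → ℝ} (hconv : ConvexOn ℝ S φ)
    (hdiff : Differentiable ℝ φ) {s y : EuclideanSpace ℝ (Fin d)}
    (hs : s ∈ S) (hy : y ∈ S) :
    ⟪gradient φ s, y - s⟫_ℝ ≤ φ y - φ s := by
  set g : ℝ → ℝ := fun t => φ (s + t • (y - s)) with hg
  have hc : ∀ t : ℝ, HasDerivAt (fun t : ℝ => s + t • (y - s)) (y - s) t := by
    intro t
    simpa using ((hasDerivAt_id t).smul_const (y - s)).const_add s
  have hF : HasFDerivAt φ (InnerProductSpace.toDual ℝ _ (gradient φ s)) s :=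
    (hdiff s).hasGradientAt.hasFDerivAt
  have hgd : HasDerivAt g ⟪gradient φ s, y - s⟫_ℝ 0 := by
    have h0 : s + (0 : ℝ) • (y - s) = s := by simp
    have := (h0 ▸ hF).comp_hasDerivAt 0 (hc 0)
    simp only [InnerProductSpace.toDual_apply_apply, h0] at this; exact this
  have htends := hasDerivAt_iff_tendsto_slope.1 hgd
  have htends' : Filter.Tendsto (slope g 0) (nhdsWithin 0 (Set.Ioi 0))
      (nhds ⟪gradient φ s, y - s⟫_ℝ) :=
    htends.mono_left (nhdsWithin_mono 0 (fun t ht => ne_of_gt ht))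
  have hbound : ∀ᶠ t in nhdsWithin (0:ℝ) (Set.Ioi 0), slope g 0 t ≤ φ y - φ s := by
    filter_upwards [Ioo_mem_nhdsGT_of_mem (Set.left_mem_Ico.2 one_pos)] with t ht
    have ht0 : (0:ℝ) < t := ht.1
    have ht1 : t ≤ 1 := le_of_lt ht.2
    have hco := hconv.2 hs hy (show (0:ℝ) ≤ 1 - t by linarith) ht0.le (by ring)
    have hpt : (1 - t) • s + t • y = s + t • (y - s) := by module
    rw [hpt] at hco
    have hg0 : g 0 = φ s := by simp [hg]
    have hslope : slope g 0 t = (g t - φ s) / t := by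
      rw [slope_def_field, hg0]; ring
    rw [hslope, div_le_iff₀ ht0]
    have : g t ≤ (1 - t) * φ s + t * φ y := by simpa [smul_eq_mul] using hco
    nlinarith
  exact le_of_tendsto htends' hbound

/-- The minimum over `s` of the expected Bregman divergence `E[d_φ(X,s)]` equals
`E[φ(X)] - φ(E[X])`. -/
theorem bregman_min_value {d : ℕ} {Ω : Type*} [MeasureSpace Ω]
    [IsProbabilityMeasure (volume : Measure Ω)]
    (S : Set (EuclideanSpace ℝ (Fin d))) (hS : Convex ℝ S)
    (φ : EuclideanSpace ℝ (Fin d) → ℝ)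
    (hconv : StrictConvexOn ℝ S φ) (hdiff : Differentiable ℝ φ)
    (dφ : EuclideanSpace ℝ (Fin d) → EuclideanSpace ℝ (Fin d) → ℝ)
    (hdφ : ∀ x s, dφ x s = φ x - φ s - ⟪gradient φ s, x - s⟫_ℝ)
    (X : Ω → EuclideanSpace ℝ (Fin d)) (hXS : ∀ ω, X ω ∈ S)
    (hXint : Integrable X) (hφXint : Integrable (fun ω => φ (X ω)))
    (hdint : ∀ s ∈ intrinsicInterior ℝ S, Integrable (fun ω => dφ (X ω) s))
    (hmean : (∫ ω, X ω) ∈ intrinsicInterior ℝ S) :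
    IsLeast {v : ℝ | ∃ s ∈ intrinsicInterior ℝ S, v = ∫ ω, dφ (X ω) s}
      ((∫ ω, φ (X ω)) - φ (∫ ω, X ω)) := by
  set μ : EuclideanSpace ℝ (Fin d) := ∫ ω, X ω with hμ
  -- integral formula for any s
  have key : ∀ s : EuclideanSpace ℝ (Fin d),
      (∫ ω, dφ (X ω) s) = (∫ ω, φ (X ω)) - φ s - ⟪gradient φ s, μ - s⟫_ℝ := by
    intro s
    have hL : Integrable (fun ω => ⟪gradient φ s, X ω - s⟫_ℝ) := by
      exact (innerSL ℝ (gradient φ s)).integrable_comp (hXint.sub (integrable_const s))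
    have hint : (∫ ω, ⟪gradient φ s, X ω - s⟫_ℝ) = ⟪gradient φ s, μ - s⟫_ℝ := by
      have := (innerSL ℝ (gradient φ s)).integral_comp_comm (hXint.sub (integrable_const s))
      simpa [integral_sub hXint (integrable_const s), hμ] using this
    calc (∫ ω, dφ (X ω) s)
        = ∫ ω, (φ (X ω) - φ s) - ⟪gradient φ s, X ω - s⟫_ℝ := by
          simp_rw [hdφ]
      _ = (∫ ω, (φ (X ω) - φ s)) - ∫ ω, ⟪gradient φ s, X ω - s⟫_ℝ :=
          integral_sub (hφXint.sub (integrable_const _)) hL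
      _ = (∫ ω, φ (X ω)) - φ s - ⟪gradient φ s, μ - s⟫_ℝ := by
          rw [integral_sub hφXint (integrable_const _), hint]; simp
  constructor
  · exact ⟨μ, hmean, by rw [key μ]; simp⟩
  · rintro v ⟨s, hsI, rfl⟩
    have hsS : s ∈ S := intrinsicInterior_subset hsI
    have hμS : μ ∈ S := intrinsicInterior_subset hmean
    have := bregman_grad_ineq hconv.convexOn hdiff hsS hμS
    rw [key s]
    linarith
end
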